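/- arXiv:1704.03451 — 5 statements merged into one kernel-verified Lean document; each statement's English description precedes it below -/
import Mathlib

section
/- For every integer n ≥ 2, with P(x) = x + x^2, the quantity A(n,P) = sup_{λ > 0} ( (2 − (n/(n−1)) e^{−λ} (2 + λ)) / λ ) satisfies A(n,P) ≥ 1 − 2 n^{−2/3}. -/
open Real

lemma expNegDeriv (x : ℝ) : HasDerivAt (fun t : ℝ => Real.exp (-t)) (-Real.exp (-x)) x := by
  simpa [Function.comp_def] using (Real.hasDerivAt_exp (-x)).comp x (hasDerivAt_neg x)

lemma nonneg_of_deriv (f f' : ℝ → ℝ) (hd : ∀ x, HasDerivAt f (f' x) x)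
    (h0 : 0 ≤ f 0) (h' : ∀ x, 0 ≤ x → 0 ≤ f' x) {x : ℝ} (hx : 0 ≤ x) : 0 ≤ f x := by
  have hmono : MonotoneOn f (Set.Ici 0) := by
    apply monotoneOn_of_deriv_nonneg (convex_Ici 0)
    · exact (Differentiable.continuous fun y => (hd y).differentiableAt).continuousOn
    · intro y _; exact (hd y).differentiableAt.differentiableWithinAt
    · intro y hy
      rw [interior_Ici] at hy
      rw [(hd y).deriv]
      exact h' y hy.le
  exact h0.trans (hmono (Set.mem_Ici.2 le_rfl) (Set.mem_Ici.2 hx) hx)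

lemma expNeg_le_two {x : ℝ} (hx : 0 ≤ x) : Real.exp (-x) ≤ 1 - x + x^2/2 := by
  have := nonneg_of_deriv (fun t => 1 - t + t^2/2 - Real.exp (-t))
    (fun t => -1 + t + Real.exp (-t))
    (fun t => by
      have h := (((hasDerivAt_const t (1:ℝ)).sub (hasDerivAt_id t)).add
        ((hasDerivAt_pow 2 t).div_const 2)).sub (expNegDeriv t)
      exact h.congr_deriv (by push_cast; ring))
    (by norm_num)
    (fun t _ => by
      have := Real.add_one_le_exp (-t)
      show 0 ≤ -1 + t + Real.exp (-t); linarith) hx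
  simpa using this

lemma expNeg_ge_three {x : ℝ} (hx : 0 ≤ x) :
    1 - x + x^2/2 - x^3/6 ≤ Real.exp (-x) := by
  have := nonneg_of_deriv (fun t => Real.exp (-t) - (1 - t + t^2/2 - t^3/6))
    (fun t => -Real.exp (-t) + 1 - t + t^2/2)
    (fun t => by
      have h := (expNegDeriv t).sub ((((hasDerivAt_const t (1:ℝ)).sub (hasDerivAt_id t)).add
        ((hasDerivAt_pow 2 t).div_const 2)).sub ((hasDerivAt_pow 3 t).div_const 6))
      exact h.congr_deriv (by push_cast; ring))
    (by norm_num)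
    (fun t ht => by
      have := expNeg_le_two ht
      show 0 ≤ -Real.exp (-t) + 1 - t + t^2/2; linarith) hx
  simpa using this

lemma expNeg_le_four {x : ℝ} (hx : 0 ≤ x) :
    Real.exp (-x) ≤ 1 - x + x^2/2 - x^3/6 + x^4/24 := by
  have := nonneg_of_deriv (fun t => (1 - t + t^2/2 - t^3/6 + t^4/24) - Real.exp (-t))
    (fun t => (-1 + t - t^2/2 + t^3/6) + Real.exp (-t))
    (fun t => by
      have h := (((((hasDerivAt_const t (1:ℝ)).sub (hasDerivAt_id t)).add
        ((hasDerivAt_pow 2 t).div_const 2)).sub ((hasDerivAt_pow 3 t).div_const 6)).add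
        ((hasDerivAt_pow 4 t).div_const 24)).sub (expNegDeriv t)
      exact h.congr_deriv (by push_cast; ring))
    (by norm_num)
    (fun t ht => by
      have := expNeg_ge_three ht
      show 0 ≤ (-1 + t - t^2/2 + t^3/6) + Real.exp (-t); linarith) hx
  simpa using this

lemma expNeg_ge_five {x : ℝ} (hx : 0 ≤ x) :
    1 - x + x^2/2 - x^3/6 + x^4/24 - x^5/120 ≤ Real.exp (-x) := by
  have := nonneg_of_deriv
    (fun t => Real.exp (-t) - (1 - t + t^2/2 - t^3/6 + t^4/24 - t^5/120))
    (fun t => -Real.exp (-t) + (1 - t + t^2/2 - t^3/6 + t^4/24))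
    (fun t => by
      have h := (expNegDeriv t).sub ((((((hasDerivAt_const t (1:ℝ)).sub (hasDerivAt_id t)).add
        ((hasDerivAt_pow 2 t).div_const 2)).sub ((hasDerivAt_pow 3 t).div_const 6)).add
        ((hasDerivAt_pow 4 t).div_const 24)).sub ((hasDerivAt_pow 5 t).div_const 120))
      exact h.congr_deriv (by push_cast; ring))
    (by norm_num)
    (fun t ht => by
      have := expNeg_le_four ht
      show 0 ≤ -Real.exp (-t) + (1 - t + t^2/2 - t^3/6 + t^4/24); linarith) hx
  simpa using this


theorem A_lower_bound_quadratic_poly (n : ℕ) (hn : 2 ≤ n) :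
    1 - 2 * (n : ℝ) ^ (-(2 / 3 : ℝ)) ≤
      sSup {x : ℝ | ∃ l : ℝ, 0 < l ∧
        x = (2 - ((n : ℝ) / ((n : ℝ) - 1)) * Real.exp (-l) * (2 + l)) / l} := by
  set N : ℝ := (n : ℝ) with hN
  have hN2 : (2 : ℝ) ≤ N := by rw [hN]; exact_mod_cast hn
  clear_value N
  clear hn hN
  have hN1 : (0 : ℝ) < N - 1 := by linarith
  have hc1 : 1 ≤ N / (N - 1) := by
    rw [le_div_iff₀ hN1]; linarith
  have hc0 : 0 ≤ N / (N - 1) := le_trans zero_le_one hc1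
  -- the set is bounded above by 1
  have hbdd : BddAbove {x : ℝ | ∃ l : ℝ, 0 < l ∧
      x = (2 - (N / (N - 1)) * Real.exp (-l) * (2 + l)) / l} := by
    refine ⟨1, fun x hx => ?_⟩
    obtain ⟨l, hl, rfl⟩ := hx
    rw [div_le_one hl]
    have hexp0 : 0 ≤ Real.exp (-l) * (2 + l) := by positivity
    rcases le_or_gt l 2 with h2 | h2
    · have h5 := expNeg_ge_five hl.le
      have hq : 0 ≤ 20 - 10*l + 3*l^2 - l^3 := by
        nlinarith [sq_nonneg l, sq_nonneg (l - 2), mul_nonneg (mul_nonneg hl.le hl.le) (show (0:ℝ) ≤ 2 - l by linarith)]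
      have hpoly : 2 - l ≤ (1 - l + l^2/2 - l^3/6 + l^4/24 - l^5/120) * (2 + l) := by
        nlinarith [mul_nonneg (pow_nonneg hl.le 3) hq]
      have h6 : 2 - l ≤ Real.exp (-l) * (2 + l) :=
        hpoly.trans (mul_le_mul_of_nonneg_right h5 (by linarith))
      have h7 : 2 - l ≤ (N / (N - 1)) * (Real.exp (-l) * (2 + l)) :=
        h6.trans (le_mul_of_one_le_left hexp0 hc1)
      nlinarith
    · have : 0 ≤ (N / (N - 1)) * (Real.exp (-l) * (2 + l)) := mul_nonneg hc0 hexp0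
      nlinarith
  -- choice of l
  have hNpos : (0 : ℝ) < N := by linarith
  obtain ⟨u, hupos, hu3, hu2⟩ : ∃ u : ℝ, 0 < u ∧ u ^ 3 = N⁻¹ ∧ N ^ (-(2/3 : ℝ)) = u ^ 2 := by
    refine ⟨N ^ (-(1/3 : ℝ)), Real.rpow_pos_of_pos hNpos _, ?_, ?_⟩
    · rw [← Real.rpow_natCast (N ^ (-(1/3:ℝ))) 3, ← Real.rpow_mul hNpos.le]
      norm_num [Real.rpow_neg_one]
    · rw [← Real.rpow_natCast (N ^ (-(1/3:ℝ))) 2, ← Real.rpow_mul hNpos.le]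
      norm_num
  have hNu3 : N * u ^ 3 = 1 := by
    rw [hu3, mul_inv_cancel₀ (ne_of_gt hNpos)]
  have hu3half : u ^ 3 ≤ 1 / 2 := by nlinarith [pow_pos hupos 3]
  have hu45 : u ≤ 4 / 5 := by nlinarith [sq_nonneg (u - 4/5), sq_nonneg (u + 4/5), hupos.le]
  have hl0 : 0 < 2 * u := by linarith
  -- the witness value
  have hmem : (2 - (N / (N - 1)) * Real.exp (-(2*u)) * (2 + 2*u)) / (2*u) ∈
      {x : ℝ | ∃ l : ℝ, 0 < l ∧
        x = (2 - (N / (N - 1)) * Real.exp (-l) * (2 + l)) / l} := ⟨2*u, hl0, rfl⟩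
  have hle := le_csSup hbdd hmem
  refine le_trans ?_ hle
  rw [hu2, le_div_iff₀ hl0]
  have hE : Real.exp (-(2*u)) ≤ 1 - (2*u) + (2*u)^2/2 - (2*u)^3/6 + (2*u)^4/24 :=
    expNeg_le_four (by linarith)
  have hstep : Real.exp (-(2*u)) * (2 + 2*u) ≤ 2 - 2*u + (2*u)^3/6 := by
    have h1 : Real.exp (-(2*u)) * (2 + 2*u) ≤
        (1 - (2*u) + (2*u)^2/2 - (2*u)^3/6 + (2*u)^4/24) * (2 + 2*u) :=
      mul_le_mul_of_nonneg_right hE (by linarith)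
    nlinarith [h1, mul_nonneg (pow_nonneg hupos.le 4) (show (0:ℝ) ≤ 1 - u by linarith)]
  have hstep2 : (N / (N - 1)) * Real.exp (-(2*u)) * (2 + 2*u) ≤
      (N / (N - 1)) * (2 - 2*u + (2*u)^3/6) := by
    rw [mul_assoc]
    exact mul_le_mul_of_nonneg_left hstep hc0
  have hcube : u^3 ≤ 16/25*u := by
    nlinarith [mul_nonneg (mul_nonneg hupos.le (show (0:ℝ) ≤ 4/5 - u by linarith))
      (show (0:ℝ) ≤ 4/5 + u by linarith)]
  have key : (N / (N - 1)) * (2 - 2*u + (2*u)^3/6) ≤ 2 - (1 - 2*u^2) * (2*u) := by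
    rw [div_mul_eq_mul_div, div_le_iff₀ hN1]
    nlinarith [hNu3, hcube, hu45]
  linarith
end

section
/- The polynomial P(x) = x + x^2 + (2/3)x^3 is admissible: P(0) = 0, P'(0) = 1, its coefficients are nonnegative, and Re(P(1/z)) ≥ 0 for every complex number z with Re(z) ≥ 1. -/
open Polynomial

theorem cubic_is_admissible :
    (X + X ^ 2 + C (2 / 3) * X ^ 3 : ℝ[X]).eval 0 = 0 ∧
    (X + X ^ 2 + C (2 / 3) * X ^ 3 : ℝ[X]).derivative.eval 0 = 1 ∧
    (∀ k, 0 ≤ (X + X ^ 2 + C (2 / 3) * X ^ 3 : ℝ[X]).coeff k) ∧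
    ∀ z : ℂ, 1 ≤ z.re →
      0 ≤ (Polynomial.aeval (1 / z) (X + X ^ 2 + C (2 / 3) * X ^ 3 : ℝ[X]) : ℂ).re := by
  refine ⟨by simp, by simp, ?_, ?_⟩
  · intro k
    simp only [coeff_add, coeff_X, coeff_X_pow, coeff_C_mul]
    split_ifs <;> norm_num
  · intro z hz
    have hz0 : z ≠ 0 := by
      intro h; rw [h] at hz; simp at hz; linarith
    have hn : 0 < Complex.normSq z := Complex.normSq_pos.mpr hz0
    have hexp : (Polynomial.aeval (1 / z) (X + X ^ 2 + C (2 / 3) * X ^ 3 : ℝ[X]) : ℂ)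
        = z⁻¹ + z⁻¹ * z⁻¹ + ((2:ℂ)/3) * (z⁻¹ * z⁻¹ * z⁻¹) := by
      simp [map_add, map_mul, map_pow, aeval_X, aeval_C]
      push_cast
      ring
    rw [hexp]
    set a := z.re with ha
    set b := z.im with hb
    set n := Complex.normSq z with hnn
    have hns : n = a * a + b * b := Complex.normSq_apply z
    simp only [Complex.add_re, Complex.mul_re, Complex.mul_im, Complex.inv_re,
      Complex.inv_im, Complex.div_re, Complex.div_im, Complex.ofReal_re, Complex.ofReal_im]
    rw [← hnn, ← ha, ← hb]
    norm_num
    simp only [neg_div]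
    set u := a / n with hu
    set v := b / n with hv
    have hu0 : 0 ≤ u := div_nonneg (by linarith) hn.le
    have h1 : u * u + v * v = 1 / n := by
      rw [hu, hv, div_mul_div_comm, div_mul_div_comm, ← add_div, ← hns]
      rw [div_eq_div_iff (by positivity) hn.ne']
      ring
    have h2 : 1 / n ≤ u := by
      rw [hu]; gcongr
    have hs : 0 ≤ u - (u * u + v * v) := by rw [h1]; linarith
    nlinarith [mul_nonneg (show (0:ℝ) ≤ 1 + 2 * u by linarith) hs,
      pow_nonneg hu0 3, hu0, sq_nonneg v]
end

section
/- Let P be a polynomial with nonnegative real coefficients satisfying P(0) = 0 and P'(0) = 1. If Re(P(1/(1+iy))) ≥ 0 for all real y ≥ 0, then Re(P(1/z)) ≥ 0 for all complex z with Re(z) ≥ 1; i.e., P is admissible. -/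
open Polynomial Complex

private lemma aeval_conj' (P : ℝ[X]) (w : ℂ) :
    (aeval (starRingEnd ℂ w) P : ℂ) = starRingEnd ℂ (aeval w P) := by
  simpa using Polynomial.aeval_algHom_apply Complex.conjAe w P

theorem heath_brown_boundary_criterion (P : ℝ[X])
    (hcoeff : ∀ k, 0 ≤ P.coeff k) (h0 : P.eval 0 = 0) (h1 : P.derivative.eval 0 = 1)
    (hbd : ∀ y : ℝ, 0 ≤ y → 0 ≤ (Polynomial.aeval (1 / (1 + y * Complex.I)) P : ℂ).re) :
    ∀ z : ℂ, 1 ≤ z.re → 0 ≤ (Polynomial.aeval (1 / z) P : ℂ).re := by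
  -- Extend the boundary hypothesis to all real y by conjugation symmetry
  have hbd' : ∀ y : ℝ, 0 ≤ (aeval (1 / (1 + y * Complex.I)) P : ℂ).re := by
    intro y
    rcases le_or_gt 0 y with hy | hy
    · exact hbd y hy
    · have h := hbd (-y) (by linarith)
      have hc : (aeval (1 / (1 + y * Complex.I)) P : ℂ)
          = starRingEnd ℂ (aeval (1 / (1 + (-y : ℝ) * Complex.I)) P) := by
        rw [← aeval_conj']
        congr 1
        rw [map_div₀]
        simp [Complex.ext_iff]
      rw [hc, Complex.conj_re]
      exact h
  intro z hz
  have hz0 : z ≠ 0 := by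
    intro h; rw [h] at hz; simp at hz; linarith
  set f : ℂ → ℂ := fun w => Complex.exp (-(aeval w P)) with hf
  have h1' : Differentiable ℂ fun w : ℂ => (aeval w P : ℂ) := by
    have he : (fun w : ℂ => (aeval w P : ℂ)) = fun w => (P.map (algebraMap ℝ ℂ)).eval w := by
      funext w; rw [aeval_def, eval_map]
    rw [he]; exact (P.map (algebraMap ℝ ℂ)).differentiable
  have hdiff : Differentiable ℂ f := h1'.neg.cexp
  -- 1/z is in the closed ball of center 1/2 radius 1/2
  have hmem : 1 / z ∈ closure (Metric.ball (1/2 : ℂ) (1/2)) := by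
    rw [closure_ball _ (by norm_num : (1/2 : ℝ) ≠ 0), Metric.mem_closedBall,
      Complex.dist_eq]
    have hrw : 1 / z - 1/2 = (2 - z) / (2 * z) := by
      rw [sub_div]
      congr 1
      · rw [div_eq_div_iff hz0 (mul_ne_zero two_ne_zero hz0)]; ring
      · rw [div_eq_div_iff two_ne_zero (mul_ne_zero two_ne_zero hz0)]; ring
    rw [hrw, norm_div]
    have habs : ‖2 - z‖ ≤ ‖z‖ := by
      rw [Complex.norm_def, Complex.norm_def]
      apply Real.sqrt_le_sqrt
      rw [Complex.normSq_apply, Complex.normSq_apply]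
      simp only [Complex.sub_re, Complex.sub_im]
      have h2re : (2 : ℂ).re = 2 := by norm_num
      have h2im : (2 : ℂ).im = 0 := by norm_num
      rw [h2re, h2im]
      nlinarith [sq_nonneg z.im]
    have hzpos : 0 < ‖z‖ := by
      simpa using norm_pos_iff.mpr hz0
    rw [div_le_iff₀ (by simpa using mul_pos (by norm_num : (0:ℝ) < 2) hzpos)]
    calc ‖2 - z‖ ≤ ‖z‖ := habs
      _ ≤ 1/2 * (‖2 * z‖) := by
          rw [norm_mul, Complex.norm_two]; linarith
  -- boundary bound
  have hb : ∀ w ∈ frontier (Metric.ball (1/2 : ℂ) (1/2)), ‖f w‖ ≤ 1 := by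
    intro w hw
    rw [frontier_ball _ (by norm_num : (1/2 : ℝ) ≠ 0)] at hw
    have hsph : ‖w - 1/2‖ = 1/2 := by
      simpa [Complex.dist_eq] using hw
    have hns : Complex.normSq w = w.re := by
      have h2 : Complex.normSq (w - 1/2) = 1/4 := by
        rw [← Complex.sq_norm, hsph]; norm_num
      rw [Complex.normSq_apply] at h2 ⊢
      simp only [Complex.sub_re, Complex.sub_im] at h2
      have : ((1:ℂ)/2).re = 1/2 := by norm_num
      rw [this] at h2
      have : ((1:ℂ)/2).im = 0 := by norm_num
      rw [this] at h2
      nlinarith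
    have hre : 0 ≤ (aeval w P : ℂ).re := by
      rcases eq_or_ne w 0 with h | h
      · subst h
        have : (aeval (0 : ℂ) P : ℂ) = 0 := by
          rw [show (0 : ℂ) = algebraMap ℝ ℂ 0 by simp, Polynomial.aeval_algebraMap_apply]
          simp [h0]
        rw [this]; simp
      · -- w = 1/(1 + y I) with y = (1/w).im
        have hnspos : 0 < Complex.normSq w := Complex.normSq_pos.mpr h
        have hrepos : 0 < w.re := hns ▸ hnspos
        have hinvre : (1 / w).re = 1 := by
          rw [one_div, Complex.inv_re, hns, div_self (ne_of_gt hrepos)]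
        have hwid : (1 : ℂ) + ((1/w).im : ℝ) * Complex.I = 1 / w := by
          conv_rhs => rw [← Complex.re_add_im (1/w)]
          rw [hinvre, Complex.ofReal_one]
        have : (1 : ℂ) / (1 + ((1/w).im : ℝ) * Complex.I) = w := by
          rw [hwid]; field_simp
        have := hbd' ((1/w).im)
        rwa [show (1 : ℂ) / (1 + ((1/w).im : ℝ) * Complex.I) = w from by rw [hwid]; field_simp]
          at this
    have : ‖f w‖ = Real.exp (-(aeval w P : ℂ).re) := by
      simp [hf, Complex.norm_exp]
    rw [this, Real.exp_le_one_iff]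
    linarith
  have hle := Complex.norm_le_of_forall_mem_frontier_norm_le Metric.isBounded_ball
    hdiff.diffContOnCl hb hmem
  have hle' : Real.exp (-(aeval (1/z) P : ℂ).re) ≤ 1 := by
    calc Real.exp (-(aeval (1/z) P : ℂ).re) = ‖f (1/z)‖ := by simp [hf, Complex.norm_exp]
      _ ≤ 1 := hle
  rw [Real.exp_le_one_iff] at hle'
  linarith
end

section
/- For a finite extension K/F of number fields, the set of prime ideals of F which ramify in K satisfies ∑_{v ramified} log N^F_ℚ(𝔭_v) ≤ log D_K, where D_K = |disc(K/ℚ)|. -/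
open NumberField

section Aux
open FractionalIdeal Module Algebra
open scoped nonZeroDivisors

set_option linter.unusedSectionVars false
set_option linter.unusedVariables false

variable (K : Type*) [Field K] [NumberField K]

noncomputable abbrev dualB := (traceForm ℚ K).dualBasis (traceForm_nondegenerate ℚ K) (integralBasis K)

lemma dual_one_restrict :
    (((FractionalIdeal.dual ℤ ℚ (1 : FractionalIdeal (𝓞 K)⁰ K)) :
      Submodule (𝓞 K) K).restrictScalars ℤ) =
    Submodule.span ℤ (Set.range (dualB K)) := by
  rw [← LinearMap.BilinForm.dualSubmodule_span_of_basis (traceForm ℚ K)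
    (traceForm_nondegenerate ℚ K) (integralBasis K)]
  rw [FractionalIdeal.coe_dual_one]
  have h1 : ((1 : Submodule (𝓞 K) K).restrictScalars ℤ) =
      Submodule.span ℤ (Set.range (integralBasis K)) := by
    ext y
    rw [Submodule.restrictScalars_mem, Submodule.mem_one, mem_span_integralBasis,
      RingHom.mem_range]
  rw [← h1]
  ext x
  simp only [Submodule.restrictScalars_mem, Submodule.mem_traceDual,
    LinearMap.BilinForm.mem_dualSubmodule]
  constructor
  · intro h a ha
    obtain ⟨y, hy⟩ := h a ha
    exact ⟨y, by simpa [LinearMap.toSpanSingleton_apply] using hy⟩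
  · intro h a ha
    obtain ⟨y, hy⟩ := h a ha
    exact ⟨y, by simpa [LinearMap.toSpanSingleton_apply] using hy⟩

noncomputable def dualBasisZ : Basis (Free.ChooseBasisIndex ℤ (𝓞 K)) ℤ
    ((FractionalIdeal.dual ℤ ℚ (1 : FractionalIdeal (𝓞 K)⁰ K)) : Submodule (𝓞 K) K) :=
  (Module.Basis.span ((dualB K).linearIndependent.restrict_scalars
    (smul_left_injective ℤ one_ne_zero))).map
    (LinearEquiv.ofEq _ _ ((dual_one_restrict K).symm))

lemma dualBasisZ_apply (i) : (dualBasisZ K i : K) = dualB K i := by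
  simp only [dualBasisZ, Module.Basis.map_apply, LinearEquiv.ofEq, LinearEquiv.coe_mk, LinearMap.coe_mk, AddHom.coe_mk, Equiv.refl_apply]
  exact Module.Basis.coe_span_apply ((dualB K).linearIndependent.restrict_scalars
    (smul_left_injective ℤ one_ne_zero)) i

lemma absNorm_dual_one :
    FractionalIdeal.absNorm (FractionalIdeal.dual ℤ ℚ (1 : FractionalIdeal (𝓞 K)⁰ K)) =
      |(discr K : ℚ)|⁻¹ := by
  rw [← FractionalIdeal.abs_det_basis_change (RingOfIntegers.basis K) _ (dualBasisZ K)]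
  have hcomp : ((↑) ∘ (dualBasisZ K) : _ → K) = dualB K := by
    ext i; exact dualBasisZ_apply K i
  have hb : ((RingOfIntegers.basis K).localizationLocalization ℚ ℤ⁰ K) = integralBasis K := rfl
  rw [hb, hcomp]
  -- now compute the determinant
  have h1 : (integralBasis K).toMatrix (dualB K) * (dualB K).toMatrix (integralBasis K) = 1 := by
    rw [Basis.toMatrix_mul_toMatrix_flip]
  have h2 : (dualB K).toMatrix (integralBasis K) = traceMatrix ℚ (integralBasis K) := by
    ext i j
    rw [Basis.toMatrix_apply, LinearMap.BilinForm.dualBasis_repr_apply, traceMatrix_apply,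
      traceForm_apply, traceForm_apply, mul_comm]
  have h3 : ((integralBasis K).toMatrix (dualB K)).det * (discr K : ℚ) = 1 := by
    have := congrArg Matrix.det h1
    rwa [Matrix.det_mul, Matrix.det_one, h2, ← discr_def, ← coe_discr]
      at this
  rw [Basis.det_apply]
  have hd : ((integralBasis K).toMatrix (dualB K)).det = ((discr K : ℚ))⁻¹ :=
    eq_inv_of_mul_eq_one_left h3
  rw [hd, abs_inv]

lemma absNorm_differentIdeal_eq :
    Ideal.absNorm (differentIdeal ℤ (𝓞 K)) = (discr K).natAbs := by
  have hd0 : FractionalIdeal.dual ℤ ℚ (1 : FractionalIdeal (𝓞 K)⁰ K) ≠ 0 :=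
    FractionalIdeal.dual_ne_zero ℤ ℚ one_ne_zero
  have hmul : FractionalIdeal.dual ℤ ℚ (1 : FractionalIdeal (𝓞 K)⁰ K) *
      (differentIdeal ℤ (𝓞 K) : FractionalIdeal (𝓞 K)⁰ K) = 1 := by
    rw [coeIdeal_differentIdeal ℤ ℚ K (𝓞 K), mul_inv_cancel₀ hd0]
  have := congrArg FractionalIdeal.absNorm hmul
  rw [_root_.map_mul, FractionalIdeal.coeIdeal_absNorm, FractionalIdeal.absNorm_one,
    absNorm_dual_one] at this
  have hne : |(discr K : ℚ)| ≠ 0 := by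
    simp [abs_eq_zero, discr_ne_zero K]
  have : (Ideal.absNorm (differentIdeal ℤ (𝓞 K)) : ℚ) = |(discr K : ℚ)| := by
    field_simp at this
    linarith [this]
  have h2 : ((Ideal.absNorm (differentIdeal ℤ (𝓞 K)) : ℤ) : ℚ) = (((NumberField.discr K).natAbs : ℤ) : ℚ) := by
    rw [Int.cast_natCast, this, Int.cast_natCast, Nat.cast_natAbs, Int.cast_abs]
  exact_mod_cast h2


lemma ram_dvd_different (F K : Type*) [Field F] [Field K] [NumberField F] [NumberField K] [Algebra F K] {p : Ideal (𝓞 F)} (hp : p.IsPrime) (hp0 : p ≠ ⊥)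
    {P : Ideal (𝓞 K)} (hP : P.IsPrime) (hP0 : P ≠ ⊥)
    (hcom : Ideal.comap (algebraMap (𝓞 F) (𝓞 K)) P = p)
    (he : 2 ≤ Ideal.ramificationIdx' p P) :
    P ∣ differentIdeal ℤ (𝓞 K) := by
  classical
  set q : Ideal ℤ := Ideal.comap (algebraMap ℤ (𝓞 F)) p with hq
  have hqprime : q.IsPrime := Ideal.IsPrime.comap _
  obtain ⟨x, hxp, hx0⟩ := Submodule.exists_mem_ne_zero_of_ne_bot hp0
  have hq0 : q ≠ ⊥ :=
    Ideal.comap_ne_bot_of_integral_mem hx0 hxp (Algebra.IsIntegral.isIntegral x)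
  have hqmax : q.IsMaximal := Ideal.IsPrime.isMaximal hqprime hq0
  have htower : algebraMap ℤ (𝓞 K) = (algebraMap (𝓞 F) (𝓞 K)).comp (algebraMap ℤ (𝓞 F)) := by
    ext n
    simp
  have hle : Ideal.map (algebraMap ℤ (𝓞 K)) q ≤ P ^ 2 := by
    rw [htower, ← Ideal.map_map]
    calc Ideal.map (algebraMap (𝓞 F) (𝓞 K)) (Ideal.map (algebraMap ℤ (𝓞 F)) q)
        ≤ Ideal.map (algebraMap (𝓞 F) (𝓞 K)) p := Ideal.map_mono (Ideal.map_comap_le)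
      _ ≤ P ^ 2 := Ideal.le_pow_of_le_ramificationIdx' he
  have hdvd : P ^ 2 ∣ Ideal.map (algebraMap ℤ (𝓞 K)) q := Ideal.dvd_iff_le.mpr hle
  have := pow_sub_one_dvd_differentIdeal ℤ P 2 hq0 hdvd
  simpa using this

lemma absNorm_le_absNorm (F K : Type*) [Field F] [Field K] [NumberField F] [NumberField K] [Algebra F K] {p : Ideal (𝓞 F)} (hp0 : p ≠ ⊥)
    {P : Ideal (𝓞 K)} (hP0 : P ≠ ⊥)
    (hcom : Ideal.comap (algebraMap (𝓞 F) (𝓞 K)) P = p) :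
    Ideal.absNorm p ≤ Ideal.absNorm P := by
  have hfin : Finite ((𝓞 K) ⧸ P) := by
    refine Nat.finite_of_card_ne_zero ?_
    have : Ideal.absNorm P ≠ 0 := by
      rw [ne_eq, Ideal.absNorm_eq_zero_iff]
      exact hP0
    rwa [Ideal.absNorm_apply, Submodule.cardQuot_apply] at this
  have hinj : Function.Injective (Ideal.quotientMap P (algebraMap (𝓞 F) (𝓞 K)) hcom.ge) :=
    Ideal.quotientMap_injective' hcom.le
  rw [Ideal.absNorm_apply, Submodule.cardQuot_apply, Ideal.absNorm_apply,
    Submodule.cardQuot_apply]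
  exact Nat.card_le_card_of_injective _ hinj

end Aux

theorem ramified_primes_log_norm_sum_le (F K : Type*) [Field F] [Field K]
    [NumberField F] [NumberField K] [Algebra F K]
    (S : Set (Ideal (𝓞 F)))
    (hS : S = {p : Ideal (𝓞 F) | p.IsPrime ∧ p ≠ ⊥ ∧
      ∃ P : Ideal (𝓞 K), P.IsPrime ∧ P ≠ ⊥ ∧
        Ideal.comap (algebraMap (𝓞 F) (𝓞 K)) P = p ∧
        2 ≤ Ideal.ramificationIdx' p P})
    (hfin : S.Finite) :
    ∑ p ∈ hfin.toFinset, Real.log (Ideal.absNorm p) ≤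
      Real.log ((NumberField.discr K).natAbs : ℝ) := by
  classical
  set T := hfin.toFinset with hT
  have hmem : ∀ p ∈ T, p.IsPrime ∧ p ≠ ⊥ ∧
      ∃ P : Ideal (𝓞 K), P.IsPrime ∧ P ≠ ⊥ ∧
        Ideal.comap (algebraMap (𝓞 F) (𝓞 K)) P = p ∧
        2 ≤ Ideal.ramificationIdx' p P := by
    intro p hp
    rw [hT, Set.Finite.mem_toFinset, hS] at hp
    exact hp
  have hex : ∀ p : Ideal (𝓞 F), ∃ P : Ideal (𝓞 K), p ∈ T →
      P.IsPrime ∧ P ≠ ⊥ ∧ Ideal.comap (algebraMap (𝓞 F) (𝓞 K)) P = p ∧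
      P ∣ differentIdeal ℤ (𝓞 K) ∧ Ideal.absNorm p ≤ Ideal.absNorm P := by
    intro p
    by_cases hp : p ∈ T
    · obtain ⟨h1, h2, P, hP1, hP2, hP3, hP4⟩ := hmem p hp
      exact ⟨P, fun _ => ⟨hP1, hP2, hP3, ram_dvd_different F K h1 h2 hP1 hP2 hP3 hP4,
        absNorm_le_absNorm F K h2 hP2 hP3⟩⟩
    · exact ⟨⊥, fun h => absurd h hp⟩
  choose f hf using hex
  have hinj : Set.InjOn f T := by
    intro p hp p' hp' h
    rw [← (hf p hp).2.2.1, ← (hf p' hp').2.2.1, h]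
  -- natural number inequality
  have hd0 : 0 < (NumberField.discr K).natAbs :=
    Int.natAbs_pos.mpr (NumberField.discr_ne_zero K)
  have hprod_dvd : (∏ P ∈ T.image f, P) ∣ differentIdeal ℤ (𝓞 K) := by
    refine Finset.prod_primes_dvd _ ?_ ?_
    · intro P hP
      obtain ⟨p, hp, rfl⟩ := Finset.mem_image.mp hP
      exact (Ideal.prime_iff_isPrime (hf p hp).2.1).mpr (hf p hp).1
    · intro P hP
      obtain ⟨p, hp, rfl⟩ := Finset.mem_image.mp hP
      exact (hf p hp).2.2.2.1
  have hN : (∏ p ∈ T, Ideal.absNorm p) ≤ (NumberField.discr K).natAbs := by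
    calc (∏ p ∈ T, Ideal.absNorm p) ≤ ∏ p ∈ T, Ideal.absNorm (f p) :=
          Finset.prod_le_prod' fun p hp => (hf p hp).2.2.2.2
      _ = ∏ P ∈ T.image f, Ideal.absNorm P := (Finset.prod_image (fun p hp q hq h =>
          hinj hp hq h)).symm
      _ = Ideal.absNorm (∏ P ∈ T.image f, P) := (map_prod Ideal.absNorm _ _).symm
      _ ≤ Ideal.absNorm (differentIdeal ℤ (𝓞 K)) := Nat.le_of_dvd
          (by rw [absNorm_differentIdeal_eq]; exact hd0) (map_dvd Ideal.absNorm hprod_dvd)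
      _ = (NumberField.discr K).natAbs := absNorm_differentIdeal_eq K
  have hne : ∀ p ∈ T, ((Ideal.absNorm p : ℝ)) ≠ 0 := by
    intro p hp
    have : Ideal.absNorm p ≠ 0 := by
      rw [ne_eq, Ideal.absNorm_eq_zero_iff]
      exact (hmem p hp).2.1
    exact_mod_cast this
  calc ∑ p ∈ T, Real.log (Ideal.absNorm p)
      = Real.log (∏ p ∈ T, (Ideal.absNorm p : ℝ)) := (Real.log_prod hne).symm
    _ ≤ Real.log ((NumberField.discr K).natAbs : ℝ) := by
        have h1 : (0:ℝ) < ∏ p ∈ T, (Ideal.absNorm p : ℝ) := by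
          refine Finset.prod_pos fun p hp => ?_
          exact lt_of_le_of_ne (by positivity) (Ne.symm (hne p hp))
        apply Real.log_le_log h1
        rw [← Nat.cast_prod]
        exact_mod_cast hN
end

section
/- The function A(n) = sup_{λ>0} (1 − (n/(n−1)) e^{−λ})/λ satisfies A(n) ≥ 1 − √(2/(n−1)) for every integer n ≥ 2. -/
lemma exp_neg_le_quad (s : ℝ) (hs : 0 ≤ s) : Real.exp (-s) ≤ 1 - s + s ^ 2 / 2 := by
  have hmono : MonotoneOn (fun x : ℝ => 1 - x + x ^ 2 / 2 - Real.exp (-x)) (Set.Ici 0) := by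
    apply monotoneOn_of_deriv_nonneg (convex_Ici 0)
    · fun_prop
    · fun_prop
    · intro x hx
      simp only [interior_Ici, Set.mem_Ioi] at hx
      have : deriv (fun x : ℝ => 1 - x + x ^ 2 / 2 - Real.exp (-x)) x
          = -1 + x + Real.exp (-x) := by
        have h1 : HasDerivAt (fun x : ℝ => 1 - x + x ^ 2 / 2 - Real.exp (-x))
            (0 - 1 + 2 * x ^ 1 / 2 - Real.exp (-x) * (-1)) x := by
          have he : HasDerivAt (fun x : ℝ => Real.exp (-x)) (Real.exp (-x) * (-1)) x := by
            have := (Real.hasDerivAt_exp (-x)).comp x ((hasDerivAt_id x).neg)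
            simpa [Function.comp_def] using this
          exact (((hasDerivAt_const x (1:ℝ)).sub (hasDerivAt_id x)).add
            ((hasDerivAt_pow 2 x).div_const 2)).sub he
        rw [h1.deriv]; ring
      rw [this]
      nlinarith [Real.add_one_le_exp (-x)]
  have := hmono (Set.self_mem_Ici) (Set.mem_Ici.mpr hs) hs
  simp at this
  linarith

theorem A_Li_lower_bound (n : ℕ) (hn : 2 ≤ n) :
    1 - Real.sqrt (2 / ((n : ℝ) - 1)) ≤
      sSup {x : ℝ | ∃ l : ℝ, 0 < l ∧
        x = (1 - ((n : ℝ) / ((n : ℝ) - 1)) * Real.exp (-l)) / l} := by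
  have hn1 : (1 : ℝ) ≤ (n : ℝ) - 1 := by
    have : (2 : ℝ) ≤ (n : ℝ) := by exact_mod_cast hn
    linarith
  have hn0 : (0 : ℝ) < (n : ℝ) - 1 := by linarith
  set s : ℝ := Real.sqrt (2 / ((n : ℝ) - 1)) with hs_def
  have hsq : s ^ 2 = 2 / ((n : ℝ) - 1) := Real.sq_sqrt (by positivity)
  have hs_pos : 0 < s := Real.sqrt_pos.mpr (by positivity)
  have hs_le : s ≤ 2 := by
    have h2 : 2 / ((n:ℝ) - 1) ≤ 4 := by
      rw [div_le_iff₀ hn0]; linarith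
    nlinarith [hsq, hs_pos]
  have hc : (n : ℝ) / ((n : ℝ) - 1) = 1 + s ^ 2 / 2 := by
    rw [hsq]; field_simp; ring
  have hbdd : BddAbove {x : ℝ | ∃ l : ℝ, 0 < l ∧
      x = (1 - ((n : ℝ) / ((n : ℝ) - 1)) * Real.exp (-l)) / l} := by
    refine ⟨1, fun x hx => ?_⟩
    obtain ⟨l, hl, rfl⟩ := hx
    rw [div_le_one hl]
    have h1 : 1 - l ≤ Real.exp (-l) := by
      have := Real.add_one_le_exp (-l); linarith
    have hc1 : (1:ℝ) ≤ (n : ℝ) / ((n : ℝ) - 1) := by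
      rw [le_div_iff₀ hn0]; linarith
    nlinarith [Real.exp_pos (-l)]
  have hmem : (1 - ((n : ℝ) / ((n : ℝ) - 1)) * Real.exp (-s)) / s ∈
      {x : ℝ | ∃ l : ℝ, 0 < l ∧
        x = (1 - ((n : ℝ) / ((n : ℝ) - 1)) * Real.exp (-l)) / l} :=
    ⟨s, hs_pos, rfl⟩
  have hkey : 1 - s ≤ (1 - ((n : ℝ) / ((n : ℝ) - 1)) * Real.exp (-s)) / s := by
    rw [le_div_iff₀ hs_pos, hc]
    have he := exp_neg_le_quad s hs_pos.le
    have hep := Real.exp_pos (-s)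
    nlinarith [mul_le_mul_of_nonneg_left he (by positivity : (0:ℝ) ≤ 1 + s ^ 2 / 2),
      mul_nonneg (pow_nonneg hs_pos.le 3) (by linarith : (0:ℝ) ≤ 2 - s)]
  exact hkey.trans (le_csSup hbdd hmem)
end
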